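/- (Reduction of combining to non-combining collectives, solution direction.) Consider a combining instance with identifiers: I ≥ 1 identifiers, surjective chunk map χ : Fin I → Fin G, topology cap, pre, post ⊆ Fin I × Fin P, and S steps. Assume (a) every identifier has exactly one pre node: for all i there is a unique n with (i,n) ∈ pre, and (b) the single-root condition: there is a function root : Fin G → Fin P such that post = {(i, root(χ(i))) : i ∈ Fin I}. Form the reversed non-combining instance on the same P nodes with chunk set Fin G, identity chunk map, topology capᵀ, precondition pre′ = {(χ(i), n) : (i,n) ∈ post} and postcondition post′ = {(χ(i), n) : (i,n) ∈ pre}. If T′ with round sequence q_0,…,q_{S−1} is an exactly-once algorithm for the reversed instance, then 𝓡(T′) with the reversed round sequence q_{S−1},…,q_0 is an exactly-once algorithm for the original instance (cap, pre, post). -/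

import Mathlib

/-- The bandwidth constraint: for every step `s` and ordered pair `(n,n')`, the number
of chunks `c` with `(c,n,n',s) ∈ T` is at most `cap n n' * r s`. -/
def BWOk {G P S : ℕ} (cap : Fin P → Fin P → ℕ)
    (T : Finset (Fin G × Fin P × Fin P × Fin S)) (r : Fin S → ℕ) : Prop :=
  ∀ s n n',
    (T.filter fun x => x.2.1 = n ∧ x.2.2.1 = n' ∧ x.2.2.2 = s).card ≤ cap n n' * r s

open Classical in
/-- The counting run of a chunk-keyed candidate `T` on identifiers, via the chunk map `χ`:
`cnt_0(i,n) = 1` iff `(i,n) ∈ pre`, and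
`cnt_{s+1}(i,n) = cnt_s(i,n) + Σ_{n' : (χ i, n', n, s) ∈ T} cnt_s(i,n')`. -/
noncomputable def cntI {I G P S : ℕ} (χ : Fin I → Fin G) (pre : Set (Fin I × Fin P))
    (T : Finset (Fin G × Fin P × Fin P × Fin S)) : ℕ → Fin I → Fin P → ℕ
  | 0, i, n => if (i, n) ∈ pre then 1 else 0
  | s + 1, i, n =>
      cntI χ pre T s i n +
        if h : s < S then
          ∑ n' : Fin P, if (χ i, n', n, ⟨s, h⟩) ∈ T then cntI χ pre T s i n' else 0
        else 0

/-- `T` with round sequence `r` is an exactly-once algorithm for `(cap, pre, post)`: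
`cnt_S(i,n) = 1` for every `(i,n) ∈ post`, and the bandwidth constraints hold. -/
def ExactlyOnce {I G P S : ℕ} (χ : Fin I → Fin G) (cap : Fin P → Fin P → ℕ)
    (pre post : Set (Fin I × Fin P)) (T : Finset (Fin G × Fin P × Fin P × Fin S))
    (r : Fin S → ℕ) : Prop :=
  (∀ q ∈ post, cntI χ pre T S q.1 q.2 = 1) ∧ BWOk cap T r

/-- The reversal `𝓡(T) = {(c, n', n, S−1−s) : (c, n, n', s) ∈ T}` of a candidate. -/
def revT {G P S : ℕ} (T : Finset (Fin G × Fin P × Fin P × Fin S)) :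
    Finset (Fin G × Fin P × Fin P × Fin S) :=
  T.image fun x => (x.1, x.2.2.1, x.2.1, x.2.2.2.rev)


lemma mem_revT {G P S : ℕ} (T : Finset (Fin G × Fin P × Fin P × Fin S))
    (c : Fin G) (a b : Fin P) (t : Fin S) :
    (c, a, b, t) ∈ revT T ↔ (c, b, a, t.rev) ∈ T := by
  constructor
  · intro hm
    obtain ⟨⟨c', a', b', t'⟩, hx, heq⟩ := Finset.mem_image.mp hm
    simp only [Prod.mk.injEq] at heq
    obtain ⟨rfl, rfl, rfl, ht⟩ := heq
    rw [← ht, Fin.rev_rev]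
    exact hx
  · intro hm
    refine Finset.mem_image.mpr ⟨(c, b, a, t.rev), hm, ?_⟩
    simp [Fin.rev_rev]

open Classical in
lemma cntI_zero {I G P S : ℕ} (χ : Fin I → Fin G) (pre : Set (Fin I × Fin P))
    (T : Finset (Fin G × Fin P × Fin P × Fin S)) (i : Fin I) (n : Fin P) :
    cntI χ pre T 0 i n = if (i, n) ∈ pre then 1 else 0 := by
  rw [cntI]

open Classical in
lemma cntI_succ {I G P S : ℕ} (χ : Fin I → Fin G) (pre : Set (Fin I × Fin P))
    (T : Finset (Fin G × Fin P × Fin P × Fin S)) (s : ℕ) (hs : s < S) (i : Fin I) (n : Fin P) :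
    cntI χ pre T (s + 1) i n = cntI χ pre T s i n +
      ∑ n' : Fin P, if (χ i, n', n, ⟨s, hs⟩) ∈ T then cntI χ pre T s i n' else 0 := by
  rw [cntI, dif_pos hs]

/-- Reduction of combining to non-combining collectives, solution direction: an exactly-once
algorithm `T'` (with rounds `q`) for the reversed non-combining instance
`(capᵀ, pre', post')` yields the exactly-once algorithm `𝓡(T')` (with reversed rounds)
for the original combining instance `(cap, pre, post)`. -/
theorem combining_reduction_solution
    {I G P S : ℕ} (hI : 1 ≤ I) (hG : 1 ≤ G) (hP : 1 ≤ P)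
    (χ : Fin I → Fin G) (hχ : Function.Surjective χ)
    (cap : Fin P → Fin P → ℕ) (pre post : Set (Fin I × Fin P))
    (hpre : ∀ i : Fin I, ∃! n : Fin P, (i, n) ∈ pre)
    (root : Fin G → Fin P) (hpost : post = {q : Fin I × Fin P | q.2 = root (χ q.1)})
    (T' : Finset (Fin G × Fin P × Fin P × Fin S)) (q : Fin S → ℕ)
    (h : ExactlyOnce (id : Fin G → Fin G) (fun n n' => cap n' n)
      ((fun p : Fin I × Fin P => (χ p.1, p.2)) '' post)
      ((fun p : Fin I × Fin P => (χ p.1, p.2)) '' pre) T' q) :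
    ExactlyOnce χ cap pre post (revT T') (fun s => q s.rev) := by
  classical
  obtain ⟨hcnt, hbw⟩ := h
  constructor
  · rintro ⟨i, n⟩ hq
    have hn : n = root (χ i) := by rw [hpost] at hq; exact hq
    subst hn
    set g := χ i with hg
    set pre' : Set (Fin G × Fin P) := (fun p : Fin I × Fin P => (χ p.1, p.2)) '' post with hpre'
    have hA : ∀ m : Fin P, ∀ s (hs : s < S),
        cntI χ pre (revT T') (s + 1) i m = cntI χ pre (revT T') s i m +
          ∑ n' : Fin P, if (g, m, n', (⟨s, hs⟩ : Fin S).rev) ∈ T' then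
            cntI χ pre (revT T') s i n' else 0 := by
      intro m s hs
      rw [cntI_succ χ pre (revT T') s hs i m]
      simp only [mem_revT, hg]
    have step : ∀ s (hs : s < S),
        ∑ m : Fin P, cntI χ pre (revT T') (s + 1) i m *
            cntI (id : Fin G → Fin G) pre' T' (S - (s + 1)) g m =
        ∑ m : Fin P, cntI χ pre (revT T') s i m *
            cntI (id : Fin G → Fin G) pre' T' (S - s) g m := by
      intro s hs
      have ht : S - (s + 1) < S := by omega
      have hSs : S - s = (S - (s + 1)) + 1 := by omega
      have hfin : (⟨S - (s + 1), ht⟩ : Fin S) = (⟨s, hs⟩ : Fin S).rev := by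
        apply Fin.ext
        rw [Fin.val_rev]
      rw [hSs]
      have hB : ∀ m : Fin P,
          cntI (id : Fin G → Fin G) pre' T' ((S - (s + 1)) + 1) g m =
          cntI (id : Fin G → Fin G) pre' T' (S - (s + 1)) g m +
            ∑ n' : Fin P, if (g, n', m, (⟨s, hs⟩ : Fin S).rev) ∈ T' then
              cntI (id : Fin G → Fin G) pre' T' (S - (s + 1)) g n' else 0 := by
        intro m
        rw [cntI_succ (id : Fin G → Fin G) pre' T' (S - (s + 1)) ht g m]
        simp only [id_eq, hfin]
      simp only [hA _ s hs, hB]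
      simp only [add_mul, mul_add, Finset.sum_add_distrib, Finset.sum_mul, Finset.mul_sum,
        ite_mul, mul_ite, zero_mul, mul_zero]
      congr 1
      rw [Finset.sum_comm]
    have inv : ∀ s, s ≤ S →
        ∑ m : Fin P, cntI χ pre (revT T') s i m *
            cntI (id : Fin G → Fin G) pre' T' (S - s) g m =
        ∑ m : Fin P, cntI χ pre (revT T') 0 i m *
            cntI (id : Fin G → Fin G) pre' T' S g m := by
      intro s
      induction s with
      | zero => intro _; simp
      | succ k ih =>
        intro hk
        rw [step k (by omega), ih (by omega)]
    have hinv := inv S le_rfl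
    have hB0 : ∀ m : Fin P,
        cntI (id : Fin G → Fin G) pre' T' 0 g m = if m = root g then 1 else 0 := by
      intro m
      rw [cntI_zero]
      congr 1
      simp only [eq_iff_iff]
      constructor
      · rintro ⟨⟨i', n'⟩, hmem, heq⟩
        rw [hpost] at hmem
        simp only [Set.mem_setOf_eq] at hmem
        simp only [Prod.mk.injEq] at heq
        obtain ⟨h1, h2⟩ := heq
        rw [← h2, hmem, h1]
      · intro hm
        obtain ⟨i', hi'⟩ := hχ g
        refine ⟨(i', root g), ?_, ?_⟩
        · rw [hpost]; simp [hi']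
        · simp [hi', hm]
    have hA0 : ∀ m : Fin P,
        cntI χ pre (revT T') 0 i m = if (i, m) ∈ pre then 1 else 0 := fun m =>
      cntI_zero χ pre (revT T') i m
    obtain ⟨n₀, hn₀, huniq⟩ := hpre i
    have hleft : ∑ m : Fin P, cntI χ pre (revT T') S i m *
        cntI (id : Fin G → Fin G) pre' T' (S - S) g m = cntI χ pre (revT T') S i (root g) := by
      rw [Nat.sub_self]
      rw [Finset.sum_congr rfl (fun m _ => by rw [hB0 m])]
      simp [Finset.sum_ite_eq' Finset.univ (root g)]
    have hright : ∑ m : Fin P, cntI χ pre (revT T') 0 i m *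
        cntI (id : Fin G → Fin G) pre' T' S g m = 1 := by
      rw [Finset.sum_congr rfl (fun m _ => by rw [hA0 m])]
      rw [Finset.sum_eq_single n₀]
      · rw [if_pos hn₀, one_mul]
        exact hcnt (g, n₀) ⟨(i, n₀), hn₀, rfl⟩
      · intro m _ hm
        rw [if_neg (fun hmem => hm (huniq m hmem)), zero_mul]
      · intro hmem
        exact absurd (Finset.mem_univ n₀) hmem
    have : cntI χ pre (revT T') S i (root g) = 1 := by
      rw [← hleft, hinv, hright]
    exact this
  · intro s n n'
    have hb := hbw s.rev n' n
    refine le_trans ?_ hb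
    apply Finset.card_le_card_of_injOn (fun x => (x.1, x.2.2.1, x.2.1, x.2.2.2.rev))
    · rintro ⟨c, a, b, t⟩ hx
      rw [Finset.mem_coe, Finset.mem_filter] at hx
      obtain ⟨hmem, h1, h2, h3⟩ := hx
      simp only at h1 h2 h3
      subst h1; subst h2; subst h3
      rw [Finset.mem_coe, Finset.mem_filter]
      exact ⟨(mem_revT T' c a b t).mp hmem, rfl, rfl, rfl⟩
    · rintro ⟨c, a, b, t⟩ _ ⟨c', a', b', t'⟩ _ heq
      simp only [Prod.mk.injEq] at heq
      obtain ⟨h1, h2, h3, h4⟩ := heq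
      have := Fin.rev_injective h4
      simp_all
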